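/- The set 𝒢 of annihilators in (V^n)* of the members of 𝒢′ is a building set: for every subspace C of (V^n)* that is a sum of members of 𝒢, one has C = G₁ ⊕ ⋯ ⊕ G_s, where G₁,…,G_s are the maximal members of 𝒢 contained in C. -/

import Mathlib

variable {G : Type*} [Group G] {V : Type*} [AddCommGroup V] [Module ℂ V]

/-- The subspace `Fix(H)` of vectors fixed by every element of the subgroup `H`
under the representation `ρ`. -/
def fixedSpace (ρ : Representation ℂ G V) (H : Subgroup G) : Submodule ℂ V where
  carrier := {v | ∀ h ∈ H, ρ h v = v}
  add_mem' := by
    intro a b ha hb h hh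
    rw [map_add, ha h hh, hb h hh]
  zero_mem' := by
    intro h hh
    exact map_zero _
  smul_mem' := by
    intro c a ha h hh
    rw [map_smul, ha h hh]

/-- A subgroup `H ≤ G` is closed (w.r.t. `ρ`) if every subgroup `K` with `H ≤ K`
and `Fix(K) = Fix(H)` satisfies `K = H`. -/
def IsClosedSubgroup (ρ : Representation ℂ G V) (H : Subgroup G) : Prop :=
  ∀ K : Subgroup G, H ≤ K → fixedSpace ρ K = fixedSpace ρ H → K = H

/-- The subspace `H^K(i₁^{g₁K},…,i_k^{g_kK})` of `V^n`: tuples `w` such that there is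
`v ∈ Fix(K)` with `w (i j) = ρ (g j) v` for all `j`. -/
def HKsub (ρ : Representation ℂ G V) {n k : ℕ} (K : Subgroup G)
    (i : Fin k → Fin n) (g : Fin k → G) : Submodule ℂ (Fin n → V) where
  carrier := {w | ∃ v, v ∈ fixedSpace ρ K ∧ ∀ j, w (i j) = ρ (g j) v}
  add_mem' := by
    rintro w₁ w₂ ⟨v₁, hv₁, h₁⟩ ⟨v₂, hv₂, h₂⟩
    exact ⟨v₁ + v₂, (fixedSpace ρ K).add_mem hv₁ hv₂, fun j => by
      simp only [Pi.add_apply, map_add, h₁ j, h₂ j]⟩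
  zero_mem' :=
    ⟨0, (fixedSpace ρ K).zero_mem, fun j => by simp⟩
  smul_mem' := by
    rintro c w ⟨v, hv, h⟩
    exact ⟨c • v, (fixedSpace ρ K).smul_mem c hv, fun j => by
      simp only [Pi.smul_apply, map_smul, h j]⟩

/-- The family 𝒢′ of subspaces `H^K(i₁^{g₁K},…,i_k^{g_kK})` of `V^n`, where `K` is a
closed subgroup of `G`, the indices are strictly increasing, and either `k ≥ 2`
or (`k = 1` and `K ≠ {e}`). -/
def GPrime (ρ : Representation ℂ G V) (n : ℕ) : Set (Submodule ℂ (Fin n → V)) :=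
  {W | ∃ (k : ℕ) (K : Subgroup G) (i : Fin (k + 1) → Fin n) (g : Fin (k + 1) → G),
        StrictMono i ∧ IsClosedSubgroup ρ K ∧ (k = 0 → K ≠ ⊥) ∧ W = HKsub ρ K i g}

/-!
STATEMENT 10: The set 𝒢 of annihilators in (V^n)* of the members of 𝒢′ is a
building set: every subspace C of (V^n)* which is a sum of members of 𝒢 is the
direct sum of the maximal members of 𝒢 contained in C.
-/

section Basics

variable (ρ : Representation ℂ G V)

lemma mem_fixedSpace {K : Subgroup G} {v : V} :
    v ∈ fixedSpace ρ K ↔ ∀ h ∈ K, ρ h v = v := Iff.rfl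

lemma rho_inv_apply (g : G) (v : V) : ρ g⁻¹ (ρ g v) = v := by
  rw [← Module.End.mul_apply, ← map_mul, inv_mul_cancel, map_one, Module.End.one_apply]

lemma rho_apply_inv (g : G) (v : V) : ρ g (ρ g⁻¹ v) = v := by
  rw [← Module.End.mul_apply, ← map_mul, mul_inv_cancel, map_one, Module.End.one_apply]

lemma rho_inj {g : G} {v w : V} (h : ρ g v = ρ g w) : v = w := by
  have := congrArg (ρ g⁻¹) h
  rwa [rho_inv_apply, rho_inv_apply] at this

lemma rho_eq_zero {g : G} {v : V} (h : ρ g v = 0) : v = 0 := by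
  have : ρ g v = ρ g 0 := by rw [h, map_zero]
  exact rho_inj ρ this

lemma fixedSpace_bot : fixedSpace ρ (⊥ : Subgroup G) = ⊤ := by
  ext v
  simp only [mem_fixedSpace, Submodule.mem_top, iff_true]
  intro h hh
  rw [Subgroup.mem_bot] at hh
  rw [hh, map_one, Module.End.one_apply]

lemma fixedSpace_eq_top_imp (hfaith : Function.Injective ρ) {K : Subgroup G}
    (h : fixedSpace ρ K = ⊤) : K = ⊥ := by
  ext k
  simp only [Subgroup.mem_bot]
  constructor
  · intro hk
    apply hfaith
    rw [map_one]
    apply LinearMap.ext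
    intro v
    have : v ∈ fixedSpace ρ K := h ▸ Submodule.mem_top
    simpa using this k hk
  · rintro rfl; exact K.one_mem

lemma mem_fixedSpace_closure {S : Set G} {v : V} :
    v ∈ fixedSpace ρ (Subgroup.closure S) ↔ ∀ g ∈ S, ρ g v = v := by
  constructor
  · intro hv g hg
    exact hv g (Subgroup.subset_closure hg)
  · intro hv g hg
    induction hg using Subgroup.closure_induction with
    | mem x hx => exact hv x hx
    | one => rw [map_one, Module.End.one_apply]
    | mul x y _ _ hx hy => rw [map_mul, Module.End.mul_apply, hy, hx]
    | inv x _ hx => rw [← hx, rho_inv_apply]; rw [hx]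

/-- The closure of a subgroup: all elements fixing `Fix K` pointwise. -/
def clSubgroup (K : Subgroup G) : Subgroup G where
  carrier := {g | ∀ v ∈ fixedSpace ρ K, ρ g v = v}
  one_mem' := by intro v _; rw [map_one, Module.End.one_apply]
  mul_mem' := by intro a b ha hb v hv; rw [map_mul, Module.End.mul_apply, hb v hv, ha v hv]
  inv_mem' := by
    intro a ha v hv
    have := ha v hv
    rw [← this, rho_inv_apply, this]

lemma le_clSubgroup (K : Subgroup G) : K ≤ clSubgroup ρ K := fun g hg v hv => hv g hg

lemma fixedSpace_clSubgroup (K : Subgroup G) :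
    fixedSpace ρ (clSubgroup ρ K) = fixedSpace ρ K := by
  apply le_antisymm
  · intro v hv g hg
    exact hv g (le_clSubgroup ρ K hg)
  · intro v hv g hg
    exact hg v hv

lemma isClosed_clSubgroup (K : Subgroup G) : IsClosedSubgroup ρ (clSubgroup ρ K) := by
  intro K' hle hfx
  apply le_antisymm _ hle
  intro g hg v hv
  rw [← fixedSpace_clSubgroup ρ K, ← hfx] at hv
  exact hv g hg

lemma clSubgroup_ne_bot (K : Subgroup G) (h : fixedSpace ρ K ≠ ⊤) :
    clSubgroup ρ K ≠ ⊥ := by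
  intro hb
  apply h
  rw [← fixedSpace_clSubgroup ρ K, hb, fixedSpace_bot]

end Basics
/-- A block of data for the decomposition: a subgroup, a support set, coset elements. -/
structure RBlock (G : Type*) (n : ℕ) where
  K : Set G
  T : Finset (Fin n)
  c : Fin n → G

section Blocks
variable (ρ : Representation ℂ G V) {n : ℕ}

/- We store `K` as a `Set G` to avoid needing the group instance in the structure;
   interpret via `Subgroup.closure`. -/
/-- The fixed space of a block. -/
def bFix (b : RBlock G n) : Submodule ℂ V := fixedSpace ρ (Subgroup.closure b.K)

/-- The subspace of `V^n` determined by a block. -/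
def Eb (b : RBlock G n) : Submodule ℂ (Fin n → V) where
  carrier := {w | ∃ v ∈ bFix ρ b, ∀ t ∈ b.T, w t = ρ (b.c t) v}
  add_mem' := by
    rintro w₁ w₂ ⟨v₁, hv₁, h₁⟩ ⟨v₂, hv₂, h₂⟩
    exact ⟨v₁ + v₂, (bFix ρ b).add_mem hv₁ hv₂, fun t ht => by
      simp only [Pi.add_apply, map_add, h₁ t ht, h₂ t ht]⟩
  zero_mem' := ⟨0, (bFix ρ b).zero_mem, fun t _ => by simp⟩
  smul_mem' := by
    rintro c w ⟨v, hv, h⟩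
    exact ⟨c • v, (bFix ρ b).smul_mem c hv, fun t ht => by
      simp only [Pi.smul_apply, map_smul, h t ht]⟩

lemma mem_Eb {b : RBlock G n} {w : Fin n → V} :
    w ∈ Eb ρ b ↔ ∃ v ∈ bFix ρ b, ∀ t ∈ b.T, w t = ρ (b.c t) v := Iff.rfl

/-- Block well-formedness. -/
def BlockOK (b : RBlock G n) : Prop :=
  b.T.Nonempty ∧ (b.T.card = 1 → bFix ρ b ≠ ⊤)

/-- Compatibility of two blocks. -/
def BlockCompat (b x : RBlock G n) : Prop :=
  Disjoint b.T x.T ∧ ¬(bFix ρ b = ⊥ ∧ bFix ρ x = ⊥)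

lemma blockCompat_symm {b x : RBlock G n} (h : BlockCompat ρ b x) : BlockCompat ρ x b :=
  ⟨h.1.symm, fun hc => h.2 ⟨hc.2, hc.1⟩⟩

/-- A good family of blocks. -/
def GoodL (L : List (RBlock G n)) : Prop :=
  (∀ b ∈ L, BlockOK ρ b) ∧ L.Pairwise (BlockCompat ρ)

/-- The intersection of the subspaces of a list of blocks. -/
def SInfE (L : List (RBlock G n)) : Submodule ℂ (Fin n → V) :=
  sInf (Eb ρ '' {b | b ∈ L})

lemma SInfE_nil : SInfE ρ ([] : List (RBlock G n)) = ⊤ := by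
  simp [SInfE]

lemma SInfE_cons (b : RBlock G n) (L : List (RBlock G n)) :
    SInfE ρ (b :: L) = Eb ρ b ⊓ SInfE ρ L := by
  have : {x | x ∈ b :: L} = insert b {x | x ∈ L} := by
    ext y; simp [List.mem_cons]
  rw [SInfE, this, Set.image_insert_eq, sInf_insert, SInfE]

lemma SInfE_congr {L L' : List (RBlock G n)} (h : ∀ x, x ∈ L ↔ x ∈ L') :
    SInfE ρ L = SInfE ρ L' := by
  unfold SInfE
  congr 1
  ext y
  simp only [Set.mem_image, Set.mem_setOf_eq]
  exact ⟨fun ⟨x, hx, hy⟩ => ⟨x, (h x).1 hx, hy⟩, fun ⟨x, hx, hy⟩ => ⟨x, (h x).2 hx, hy⟩⟩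

lemma SInfE_le_of_mem {L : List (RBlock G n)} {b : RBlock G n} (h : b ∈ L) :
    SInfE ρ L ≤ Eb ρ b :=
  sInf_le ⟨b, h, rfl⟩

lemma pairwise_compat_forall {L : List (RBlock G n)} (hp : L.Pairwise (BlockCompat ρ))
    {a b : RBlock G n} (ha : a ∈ L) (hb : b ∈ L) (hne : a ≠ b) : BlockCompat ρ a b :=
  haveI : Std.Symm (BlockCompat (n := n) ρ) := ⟨fun _ _ h => blockCompat_symm ρ h⟩
  List.Pairwise.forall (R := BlockCompat (n := n) ρ) hp ha hb hne

end Blocks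
section Merge
variable (ρ : Representation ℂ G V) {n : ℕ}

lemma rho_conj_fix (g h : G) (v : V) :
    ρ (g * h * g⁻¹) v = v ↔ ρ h (ρ g⁻¹ v) = ρ g⁻¹ v := by
  rw [map_mul, map_mul, Module.End.mul_apply, Module.End.mul_apply]
  constructor
  · intro H
    apply rho_inj ρ (g := g)
    rw [rho_apply_inv]
    exact H
  · intro H
    rw [H, rho_apply_inv]

/-- The generating set for the merged block's subgroup. -/
def mergeKSet {n : ℕ} (b x : RBlock G n) (t0 : Fin n) : Set G :=
  (fun k => b.c t0 * k * (b.c t0)⁻¹) '' b.K ∪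
  (fun k => x.c t0 * k * (x.c t0)⁻¹) '' x.K ∪
  {g | ∃ t ∈ b.T ∩ x.T, g = (x.c t0) * (x.c t)⁻¹ * ((b.c t) * (b.c t0)⁻¹)}

/-- Merging two blocks. -/
noncomputable def mergeB {n : ℕ} (b x : RBlock G n) : RBlock G n :=
  if h : (b.T ∩ x.T).Nonempty then
    ⟨mergeKSet b x h.choose, b.T ∪ x.T,
      fun t => if t ∈ b.T then b.c t * (b.c h.choose)⁻¹ else x.c t * (x.c h.choose)⁻¹⟩
  else ⟨Set.univ, b.T ∪ x.T, 1⟩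

lemma mem_bFix_merge {b x : RBlock G n} (hI : (b.T ∩ x.T).Nonempty) (v : V) :
    v ∈ bFix ρ (mergeB b x) ↔
      (ρ (b.c hI.choose)⁻¹ v ∈ bFix ρ b ∧ ρ (x.c hI.choose)⁻¹ v ∈ bFix ρ x ∧
        ∀ t ∈ b.T ∩ x.T,
          ρ ((x.c hI.choose) * (x.c t)⁻¹ * ((b.c t) * (b.c hI.choose)⁻¹)) v = v) := by
  set t0 := hI.choose
  have hm : (mergeB b x).K = mergeKSet b x t0 := by
    rw [mergeB, dif_pos hI]
  rw [bFix, hm, mem_fixedSpace_closure]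
  unfold mergeKSet
  constructor
  · intro H
    refine ⟨?_, ?_, ?_⟩
    · rw [bFix, mem_fixedSpace_closure]
      intro k hk
      rw [← rho_conj_fix]
      exact H _ (Or.inl (Or.inl ⟨k, hk, rfl⟩))
    · rw [bFix, mem_fixedSpace_closure]
      intro k hk
      rw [← rho_conj_fix]
      exact H _ (Or.inl (Or.inr ⟨k, hk, rfl⟩))
    · intro t ht
      exact H _ (Or.inr ⟨t, ht, rfl⟩)
  · rintro ⟨h1, h2, h3⟩ g hg
    rcases hg with (⟨k, hk, rfl⟩ | ⟨k, hk, rfl⟩) | ⟨t, ht, rfl⟩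
    · rw [rho_conj_fix]
      rw [bFix, mem_fixedSpace_closure] at h1
      exact h1 k hk
    · rw [rho_conj_fix]
      rw [bFix, mem_fixedSpace_closure] at h2
      exact h2 k hk
    · exact h3 t ht

lemma Eb_merge {b x : RBlock G n} (hI : (b.T ∩ x.T).Nonempty) :
    Eb ρ (mergeB b x) = Eb ρ b ⊓ Eb ρ x := by
  set t0 := hI.choose with ht0def
  have ht0 : t0 ∈ b.T ∩ x.T := hI.choose_spec
  have ht0b : t0 ∈ b.T := (Finset.mem_inter.mp ht0).1
  have ht0x : t0 ∈ x.T := (Finset.mem_inter.mp ht0).2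
  have hmT : (mergeB b x).T = b.T ∪ x.T := by rw [mergeB, dif_pos hI]
  have hmc : (mergeB b x).c =
      fun t => if t ∈ b.T then b.c t * (b.c t0)⁻¹ else x.c t * (x.c t0)⁻¹ := by
    rw [mergeB, dif_pos hI]
  ext w
  rw [Submodule.mem_inf, mem_Eb, mem_Eb, mem_Eb]
  constructor
  · rintro ⟨v, hv, hw⟩
    rw [mem_bFix_merge ρ hI] at hv
    obtain ⟨h1, h2, h3⟩ := hv
    constructor
    · refine ⟨ρ (b.c t0)⁻¹ v, h1, fun t ht => ?_⟩
      have := hw t (by rw [hmT]; exact Finset.mem_union_left _ ht)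
      rw [hmc] at this
      simp only [if_pos ht] at this
      rw [this, map_mul, Module.End.mul_apply]
    · refine ⟨ρ (x.c t0)⁻¹ v, h2, fun t ht => ?_⟩
      have hw' := hw t (by rw [hmT]; exact Finset.mem_union_right _ ht)
      rw [hmc] at hw'
      by_cases htb : t ∈ b.T
      · simp only [if_pos htb] at hw'
        have key := h3 t (Finset.mem_inter.mpr ⟨htb, ht⟩)
        have grp : (b.c t * (b.c t0)⁻¹ : G) =
            (x.c t * (x.c t0)⁻¹) * ((x.c t0) * (x.c t)⁻¹ * ((b.c t) * (b.c t0)⁻¹)) := by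
          group
        rw [hw', grp, map_mul, Module.End.mul_apply, key, map_mul, Module.End.mul_apply]
      · simp only [if_neg htb] at hw'
        rw [hw', map_mul, Module.End.mul_apply]
  · rintro ⟨⟨v1, hv1, hw1⟩, ⟨v2, hv2, hw2⟩⟩
    have heq : ρ (b.c t0) v1 = ρ (x.c t0) v2 := by
      rw [← hw1 t0 ht0b, ← hw2 t0 ht0x]
    set v := ρ (b.c t0) v1 with hvdef
    have hvb : ρ (b.c t0)⁻¹ v = v1 := by rw [hvdef, rho_inv_apply]
    have hvx : ρ (x.c t0)⁻¹ v = v2 := by rw [heq, rho_inv_apply]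
    have hwb : ∀ t ∈ b.T, w t = ρ (b.c t * (b.c t0)⁻¹) v := by
      intro t ht
      rw [map_mul, Module.End.mul_apply, hvb, hw1 t ht]
    have hwx : ∀ t ∈ x.T, w t = ρ (x.c t * (x.c t0)⁻¹) v := by
      intro t ht
      rw [map_mul, Module.End.mul_apply, hvx, hw2 t ht]
    refine ⟨v, ?_, ?_⟩
    · rw [mem_bFix_merge ρ hI]
      refine ⟨hvb ▸ hv1, hvx ▸ hv2, fun t ht => ?_⟩
      have e1 := hwb t (Finset.mem_inter.mp ht).1
      have e2 := hwx t (Finset.mem_inter.mp ht).2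
      have : ρ (x.c t * (x.c t0)⁻¹) v = ρ (b.c t * (b.c t0)⁻¹) v := by
        rw [← e1, ← e2]
      calc ρ ((x.c t0) * (x.c t)⁻¹ * ((b.c t) * (b.c t0)⁻¹)) v
          = ρ ((x.c t0) * (x.c t)⁻¹) (ρ ((b.c t) * (b.c t0)⁻¹) v) := by
            rw [map_mul, Module.End.mul_apply]
        _ = ρ ((x.c t0) * (x.c t)⁻¹) (ρ ((x.c t) * (x.c t0)⁻¹) v) := by rw [this]
        _ = v := by
            rw [← Module.End.mul_apply, ← map_mul]
            have : ((x.c t0) * (x.c t)⁻¹ * ((x.c t) * (x.c t0)⁻¹) : G) = 1 := by group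
            rw [this, map_one, Module.End.one_apply]
    · intro t ht
      rw [hmc]
      by_cases htb : t ∈ b.T
      · simp only [if_pos htb]
        exact hwb t htb
      · simp only [if_neg htb]
        rw [hmT] at ht
        rcases Finset.mem_union.mp ht with h | h
        · exact absurd h htb
        · exact hwx t h

end Merge
open scoped Classical

section Insert
variable (ρ : Representation ℂ G V) {n : ℕ}

lemma mem_Eb_of_fix_bot {b : RBlock G n} (h : bFix ρ b = ⊥) (w : Fin n → V) :
    w ∈ Eb ρ b ↔ ∀ t ∈ b.T, w t = 0 := by
  rw [mem_Eb, h]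
  constructor
  · rintro ⟨v, hv, hw⟩ t ht
    rw [Submodule.mem_bot] at hv
    rw [hw t ht, hv, map_zero]
  · intro hw
    exact ⟨0, Submodule.zero_mem _, fun t ht => by rw [hw t ht, map_zero]⟩

lemma bFix_mergeB_of_disj (hfix : fixedSpace ρ ⊤ = ⊥) {b x : RBlock G n}
    (hI : ¬ (b.T ∩ x.T).Nonempty) : bFix ρ (mergeB b x) = ⊥ := by
  have : (mergeB b x).K = Set.univ := by rw [mergeB, dif_neg hI]
  rw [bFix, this, Subgroup.closure_univ, hfix]

lemma mergeB_T {b x : RBlock G n} : (mergeB b x).T = b.T ∪ x.T := by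
  by_cases hI : (b.T ∩ x.T).Nonempty
  · rw [mergeB, dif_pos hI]
  · rw [mergeB, dif_neg hI]

lemma Eb_merge_zero (hfix : fixedSpace ρ ⊤ = ⊥) {b x : RBlock G n}
    (hI : ¬ (b.T ∩ x.T).Nonempty) (hb : bFix ρ b = ⊥) (hx : bFix ρ x = ⊥) :
    Eb ρ (mergeB b x) = Eb ρ b ⊓ Eb ρ x := by
  ext w
  rw [Submodule.mem_inf, mem_Eb_of_fix_bot ρ (bFix_mergeB_of_disj ρ hfix hI),
    mem_Eb_of_fix_bot ρ hb, mem_Eb_of_fix_bot ρ hx, mergeB_T]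
  constructor
  · intro h
    exact ⟨fun t ht => h t (Finset.mem_union_left _ ht),
           fun t ht => h t (Finset.mem_union_right _ ht)⟩
  · rintro ⟨h1, h2⟩ t ht
    rcases Finset.mem_union.mp ht with h | h
    · exact h1 t h
    · exact h2 t h

lemma Eb_merge_conflict (hfix : fixedSpace ρ ⊤ = ⊥) {b x : RBlock G n}
    (hc : ¬ BlockCompat ρ b x) : Eb ρ (mergeB b x) = Eb ρ b ⊓ Eb ρ x := by
  by_cases hI : (b.T ∩ x.T).Nonempty
  · exact Eb_merge ρ hI
  · have hd : Disjoint b.T x.T := by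
      rw [Finset.disjoint_iff_inter_eq_empty]
      exact Finset.not_nonempty_iff_eq_empty.mp hI
    rw [BlockCompat, not_and_or] at hc
    rcases hc with hc | hc
    · exact absurd hd hc
    · rw [not_not] at hc
      exact Eb_merge_zero ρ hfix hI hc.1 hc.2

lemma mergeB_OK (hfix : fixedSpace ρ ⊤ = ⊥) [Nontrivial V] {b x : RBlock G n}
    (hb : BlockOK ρ b) (hx : BlockOK ρ x) : BlockOK ρ (mergeB b x) := by
  constructor
  · rw [mergeB_T]
    exact Finset.Nonempty.mono Finset.subset_union_left hb.1
  · intro hcard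
    by_cases hI : (b.T ∩ x.T).Nonempty
    · -- the merged fixed space injects into b's
      have hbT : b.T.card = 1 := by
        rw [mergeB_T] at hcard
        have h1 : b.T ⊆ b.T ∪ x.T := Finset.subset_union_left
        have h2 := Finset.card_le_card h1
        have h3 := Finset.card_pos.mpr hb.1
        omega
      intro htop
      apply hb.2 hbT
      rw [Submodule.eq_top_iff']
      intro v
      have hv : ρ (b.c hI.choose) v ∈ bFix ρ (mergeB b x) := htop ▸ Submodule.mem_top
      rw [mem_bFix_merge ρ hI] at hv
      have := hv.1
      rwa [rho_inv_apply] at this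
    · rw [bFix_mergeB_of_disj ρ hfix hI]
      exact bot_ne_top

/-- Insert a block into a family, merging away all conflicts. -/
noncomputable def insertB : ℕ → RBlock G n → List (RBlock G n) → List (RBlock G n)
  | 0, b, L => b :: L
  | (fuel+1), b, L =>
    if h : ∃ x ∈ L, ¬ BlockCompat ρ b x then
      insertB fuel (mergeB b h.choose) (L.erase h.choose)
    else b :: L

lemma insertB_spec (hfix : fixedSpace ρ ⊤ = ⊥) [Nontrivial V] :
    ∀ (fuel : ℕ) (b : RBlock G n) (L : List (RBlock G n)), L.length ≤ fuel →
      GoodL ρ L → BlockOK ρ b →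
      GoodL ρ (insertB ρ fuel b L) ∧
        SInfE ρ (insertB ρ fuel b L) = Eb ρ b ⊓ SInfE ρ L := by
  intro fuel
  induction fuel with
  | zero =>
    intro b L hlen hL hb
    have : L = [] := List.length_eq_zero_iff.mp (Nat.le_zero.mp hlen)
    subst this
    rw [insertB]
    refine ⟨⟨?_, ?_⟩, SInfE_cons ρ b []⟩
    · intro y hy
      rcases List.mem_cons.mp hy with rfl | hy
      · exact hb
      · exact absurd hy List.not_mem_nil
    · exact List.pairwise_singleton _ _
  | succ fuel ih =>
    intro b L hlen hL hb
    rw [insertB]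
    by_cases h : ∃ x ∈ L, ¬ BlockCompat ρ b x
    · rw [dif_pos h]
      obtain ⟨hxL, hxc⟩ := h.choose_spec
      set x := h.choose
      have hlen' : (L.erase x).length ≤ fuel := by
        rw [List.length_erase_of_mem hxL]
        omega
      have hgood' : GoodL ρ (L.erase x) := by
        refine ⟨fun y hy => hL.1 y (List.mem_of_mem_erase hy), ?_⟩
        exact List.Pairwise.sublist List.erase_sublist hL.2
      have hxOK : BlockOK ρ x := hL.1 x hxL
      obtain ⟨g1, g2⟩ := ih (mergeB b x) (L.erase x) hlen' hgood'
        (mergeB_OK ρ hfix hb hxOK)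
      refine ⟨g1, ?_⟩
      rw [g2, Eb_merge_conflict ρ hfix hxc]
      have hperm : SInfE ρ L = SInfE ρ (x :: L.erase x) := by
        apply SInfE_congr
        intro y
        exact (List.perm_cons_erase hxL).mem_iff
      rw [hperm, SInfE_cons, inf_assoc]
    · rw [dif_neg h]
      push_neg at h
      refine ⟨⟨?_, ?_⟩, SInfE_cons ρ b L⟩
      · intro y hy
        rcases List.mem_cons.mp hy with rfl | hy
        · exact hb
        · exact hL.1 y hy
      · exact List.Pairwise.cons (fun y hy => h y hy) hL.2
  
/-- Normalize a list of blocks into a good family with the same intersection. -/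
noncomputable def normL : List (RBlock G n) → List (RBlock G n)
  | [] => []
  | b :: bs => insertB ρ (normL bs).length b (normL bs)

lemma normL_spec (hfix : fixedSpace ρ ⊤ = ⊥) [Nontrivial V] (L : List (RBlock G n))
    (hL : ∀ b ∈ L, BlockOK ρ b) :
    GoodL ρ (normL ρ L) ∧ SInfE ρ (normL ρ L) = SInfE ρ L := by
  induction L with
  | nil => exact ⟨⟨fun b hb => absurd hb List.not_mem_nil, List.Pairwise.nil⟩, rfl⟩
  | cons b bs ihb =>
    obtain ⟨hg, he⟩ := ihb (fun y hy => hL y (List.mem_cons_of_mem b hy))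
    obtain ⟨hg', he'⟩ := insertB_spec ρ hfix (normL ρ bs).length b (normL ρ bs)
      le_rfl hg (hL b List.mem_cons_self)
    rw [normL]
    exact ⟨hg', by rw [he', he, SInfE_cons]⟩

end Insert
section Convert
variable (ρ : Representation ℂ G V) {n : ℕ}

lemma mem_HKsub {k : ℕ} {K : Subgroup G} {i : Fin k → Fin n} {g : Fin k → G}
    {w : Fin n → V} :
    w ∈ HKsub ρ K i g ↔ ∃ v, v ∈ fixedSpace ρ K ∧ ∀ j, w (i j) = ρ (g j) v := Iff.rfl

/-- Conversion of a `GPrime` datum to a block. -/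
lemma HK_to_block (hfaith : Function.Injective ρ) {k : ℕ} (K : Subgroup G)
    (i : Fin (k+1) → Fin n) (g : Fin (k+1) → G) (hi : StrictMono i)
    (hKk : k = 0 → K ≠ ⊥) :
    ∃ b : RBlock G n, BlockOK ρ b ∧ Eb ρ b = HKsub ρ K i g := by
  classical
  set b : RBlock G n := ⟨(K : Set G), Finset.image i Finset.univ,
    fun t => if h : ∃ j, i j = t then g h.choose else 1⟩ with hbdef
  have hfixb : bFix ρ b = fixedSpace ρ K := by
    rw [bFix, hbdef, Subgroup.closure_eq]
  have hc : ∀ j : Fin (k+1), b.c (i j) = g j := by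
    intro j
    have h : ∃ j', i j' = i j := ⟨j, rfl⟩
    show (if h : ∃ j', i j' = i j then g h.choose else 1) = g j
    rw [dif_pos h]
    congr 1
    exact hi.injective h.choose_spec
  have hT : b.T = Finset.image i Finset.univ := rfl
  refine ⟨b, ⟨?_, ?_⟩, ?_⟩
  · exact ⟨i 0, Finset.mem_image_of_mem i (Finset.mem_univ 0)⟩
  · intro hcard htop
    have hcards : b.T.card = k + 1 := by
      rw [hT, Finset.card_image_of_injective _ hi.injective, Finset.card_univ,
        Fintype.card_fin]
    have hk0 : k = 0 := by omega
    apply hKk hk0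
    apply fixedSpace_eq_top_imp ρ hfaith
    rw [← hfixb]; exact htop
  · ext w
    rw [mem_Eb, mem_HKsub, hfixb]
    constructor
    · rintro ⟨v, hv, hw⟩
      refine ⟨v, hv, fun j => ?_⟩
      have := hw (i j) (by rw [hT]; exact Finset.mem_image_of_mem i (Finset.mem_univ j))
      rwa [hc j] at this
    · rintro ⟨v, hv, hw⟩
      refine ⟨v, hv, fun t ht => ?_⟩
      rw [hT] at ht
      obtain ⟨j, _, rfl⟩ := Finset.mem_image.mp ht
      rw [hc j]
      exact hw j

/-- Conversion of a good block to a member of `GPrime`. -/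
lemma block_to_GPrime {b : RBlock G n} (hb : BlockOK ρ b) : Eb ρ b ∈ GPrime ρ n := by
  obtain ⟨hne, hcard1⟩ := hb
  have hpos : 0 < b.T.card := Finset.card_pos.mpr hne
  have hk : b.T.card = (b.T.card - 1) + 1 := by omega
  set i : Fin ((b.T.card - 1)+1) ↪o Fin n := b.T.orderEmbOfFin hk
  refine ⟨b.T.card - 1, clSubgroup ρ (Subgroup.closure b.K), fun j => i j,
    fun j => b.c (i j), i.strictMono, isClosed_clSubgroup ρ _, ?_, ?_⟩
  · intro hk0
    apply clSubgroup_ne_bot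
    apply hcard1
    omega
  · have hfixcl : fixedSpace ρ (clSubgroup ρ (Subgroup.closure b.K)) = bFix ρ b :=
      fixedSpace_clSubgroup ρ _
    have hrange : ∀ t, t ∈ b.T ↔ ∃ j, i j = t := by
      intro t
      constructor
      · intro ht
        have : t ∈ Set.range (b.T.orderEmbOfFin hk) := by
          rw [Finset.range_orderEmbOfFin]
          exact ht
        obtain ⟨j, hj⟩ := this
        exact ⟨j, hj⟩
      · rintro ⟨j, rfl⟩
        exact Finset.orderEmbOfFin_mem b.T hk j
    ext w
    rw [mem_Eb, mem_HKsub, hfixcl]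
    constructor
    · rintro ⟨v, hv, hw⟩
      exact ⟨v, hv, fun j => hw (i j) ((hrange (i j)).mpr ⟨j, rfl⟩)⟩
    · rintro ⟨v, hv, hw⟩
      refine ⟨v, hv, fun t ht => ?_⟩
      obtain ⟨j, rfl⟩ := (hrange t).mp ht
      exact hw j

end Convert
section Min
variable (ρ : Representation ℂ G V) {n : ℕ}

/-- A generic element of the intersection of a good family: pattern `φ` on blocks,
arbitrary values `u` on free coordinates. -/
noncomputable def wgen (L : List (RBlock G n)) (φ : RBlock G n → V) (u : Fin n → V) :
    Fin n → V :=
  fun t => match L.find? (fun blk => decide (t ∈ blk.T)) with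
    | some blk => ρ (blk.c t) (φ blk)
    | none => u t

lemma wgen_val_inblock {L : List (RBlock G n)} (hp : L.Pairwise (BlockCompat ρ))
    {φ : RBlock G n → V} {u : Fin n → V} {blk : RBlock G n} (hblk : blk ∈ L)
    {t : Fin n} (ht : t ∈ blk.T) :
    wgen ρ L φ u t = ρ (blk.c t) (φ blk) := by
  rw [wgen]
  cases hfind : L.find? (fun blk => decide (t ∈ blk.T)) with
  | none =>
    exfalso
    have := List.find?_eq_none.mp hfind blk hblk
    simp only [decide_eq_true_eq] at this
    exact this ht
  | some r =>
    simp only []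
    have hrt : t ∈ r.T := by
      have := List.find?_some hfind
      simpa using this
    have hrL : r ∈ L := List.mem_of_find?_eq_some hfind
    by_cases hre : r = blk
    · subst hre; rfl
    · exfalso
      have := (pairwise_compat_forall ρ hp hrL hblk hre).1
      exact (Finset.disjoint_left.mp this hrt) ht

lemma wgen_val_free {L : List (RBlock G n)} {φ : RBlock G n → V} {u : Fin n → V}
    {t : Fin n} (h : ∀ blk ∈ L, t ∉ blk.T) :
    wgen ρ L φ u t = u t := by
  rw [wgen]
  have : L.find? (fun blk => decide (t ∈ blk.T)) = none := by
    rw [List.find?_eq_none]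
    intro blk hblk
    simpa using h blk hblk
  rw [this]

lemma wgen_mem {L : List (RBlock G n)} (hp : L.Pairwise (BlockCompat ρ))
    {φ : RBlock G n → V} (hφ : ∀ blk ∈ L, φ blk ∈ bFix ρ blk) (u : Fin n → V) :
    wgen ρ L φ u ∈ SInfE ρ L := by
  rw [SInfE]
  apply Submodule.mem_sInf.mpr
  rintro p ⟨blk, hblk, rfl⟩
  exact mem_Eb ρ |>.mpr ⟨φ blk, hφ blk hblk, fun t ht => wgen_val_inblock ρ hp hblk ht⟩

/-- The minimality lemma: any well-formed block subspace containing the intersection of a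
good family contains one of the members. -/
lemma min_lemma [Nontrivial V] {L : List (RBlock G n)} (hL : GoodL ρ L)
    {b' : RBlock G n} (hb' : BlockOK ρ b') (hle : SInfE ρ L ≤ Eb ρ b') :
    ∃ blk ∈ L, Eb ρ blk ≤ Eb ρ b' := by
  classical
  obtain ⟨t1', ht1'⟩ := hb'.1
  -- Step 1: every coordinate of b'.T is covered by a block of L
  have hcov : ∀ t ∈ b'.T, ∃ blk ∈ L, t ∈ blk.T := by
    intro t ht
    by_contra hfree
    push_neg at hfree
    by_cases hex : ∃ t2 ∈ b'.T, t2 ≠ t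
    · obtain ⟨v0, hv0⟩ := exists_ne (0 : V)
      set w := wgen ρ L (fun _ => 0) (fun s => if s = t then v0 else 0) with hwdef
      have hwmem : w ∈ Eb ρ b' :=
        hle (wgen_mem ρ hL.2 (fun blk _ => Submodule.zero_mem _) _)
      obtain ⟨v', hv', hw'⟩ := mem_Eb ρ |>.mp hwmem
      obtain ⟨t2, ht2, hne⟩ := hex
      have hwt2 : w t2 = 0 := by
        by_cases h2 : ∃ blk ∈ L, t2 ∈ blk.T
        · obtain ⟨blk, hblk, hblkt⟩ := h2
          rw [hwdef, wgen_val_inblock ρ hL.2 hblk hblkt, map_zero]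
        · push_neg at h2
          rw [hwdef, wgen_val_free ρ h2, if_neg hne]
      have hv'0 : v' = 0 := by
        apply rho_eq_zero ρ (g := b'.c t2)
        rw [← hw' t2 ht2, hwt2]
      have hwt : w t = v0 := by
        rw [hwdef, wgen_val_free ρ hfree, if_pos rfl]
      apply hv0
      rw [← hwt, hw' t ht, hv'0, map_zero]
    · push_neg at hex
      have hcard : b'.T.card = 1 :=
        Finset.card_eq_one.mpr ⟨t, Finset.eq_singleton_iff_unique_mem.mpr ⟨ht, hex⟩⟩
      have hFixne := hb'.2 hcard
      have hv1 : ∃ v1, v1 ∉ bFix ρ b' := by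
        by_contra hall
        push_neg at hall
        exact hFixne (Submodule.eq_top_iff'.mpr hall)
      obtain ⟨v1, hv1⟩ := hv1
      set w := wgen ρ L (fun _ => 0) (fun s => if s = t then ρ (b'.c t) v1 else 0)
        with hwdef
      have hwmem : w ∈ Eb ρ b' :=
        hle (wgen_mem ρ hL.2 (fun blk _ => Submodule.zero_mem _) _)
      obtain ⟨v', hv', hw'⟩ := mem_Eb ρ |>.mp hwmem
      have hwt : w t = ρ (b'.c t) v1 := by
        rw [hwdef, wgen_val_free ρ hfree, if_pos rfl]
      have : v1 = v' := by
        apply rho_inj ρ (g := b'.c t)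
        rw [← hwt, hw' t ht]
      exact hv1 (this ▸ hv')
  -- key sub-lemma for step 2
  have hkey : ∀ blk1 blk2 : RBlock G n, blk1 ∈ L → blk2 ∈ L → blk1 ≠ blk2 →
      bFix ρ blk1 ≠ ⊥ → ∀ s1 ∈ b'.T, s1 ∈ blk1.T → ∀ s2 ∈ b'.T, s2 ∈ blk2.T → False := by
    intro blk1 blk2 h1L h2L hne hfb s1 hs1' hs1 s2 hs2' hs2
    obtain ⟨v1, hv1m, hv10⟩ := (Submodule.ne_bot_iff _).mp hfb
    set φ : RBlock G n → V := fun blk => if blk = blk1 then v1 else 0 with hφdef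
    have hφ : ∀ blk ∈ L, φ blk ∈ bFix ρ blk := by
      intro blk _
      simp only [hφdef]
      by_cases hb : blk = blk1
      · subst hb; rw [if_pos rfl]; exact hv1m
      · rw [if_neg hb]; exact Submodule.zero_mem _
    set w := wgen ρ L φ 0 with hwdef
    have hwmem : w ∈ Eb ρ b' := hle (wgen_mem ρ hL.2 hφ _)
    obtain ⟨v', hv', hw'⟩ := mem_Eb ρ |>.mp hwmem
    have hws2 : w s2 = 0 := by
      rw [hwdef, wgen_val_inblock ρ hL.2 h2L hs2]
      simp only [hφdef]
      rw [if_neg (Ne.symm hne), map_zero]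
    have hv'0 : v' = 0 := by
      apply rho_eq_zero ρ (g := b'.c s2)
      rw [← hw' s2 hs2', hws2]
    have hws1 : w s1 = ρ (blk1.c s1) v1 := by
      rw [hwdef, wgen_val_inblock ρ hL.2 h1L hs1]
      simp [hφdef]
    apply hv10
    apply rho_eq_zero ρ (g := blk1.c s1)
    rw [← hws1, hw' s1 hs1', hv'0, map_zero]
  -- Step 2: all of b'.T is inside one block
  obtain ⟨r1, hr1L, hr1t⟩ := hcov t1' ht1'
  have hsingle : ∀ t ∈ b'.T, t ∈ r1.T := by
    intro t ht
    obtain ⟨r2, hr2L, hr2t⟩ := hcov t ht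
    by_cases hrr : r2 = r1
    · subst hrr; exact hr2t
    · exfalso
      have hcompat := pairwise_compat_forall ρ hL.2 hr1L hr2L (Ne.symm hrr)
      by_cases hb1 : bFix ρ r1 = ⊥
      · have hb2 : bFix ρ r2 ≠ ⊥ := fun hb2 => hcompat.2 ⟨hb1, hb2⟩
        exact hkey r2 r1 hr2L hr1L hrr hb2 t ht hr2t t1' ht1' hr1t
      · exact hkey r1 r2 hr1L hr2L (Ne.symm hrr) hb1 t1' ht1' hr1t t ht hr2t
  -- Step 3: Eb r1 ≤ Eb b'
  refine ⟨r1, hr1L, ?_⟩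
  intro w hw
  obtain ⟨v, hv, hwv⟩ := mem_Eb ρ |>.mp hw
  set φ : RBlock G n → V := fun blk => if blk = r1 then v else 0 with hφdef
  have hφ : ∀ blk ∈ L, φ blk ∈ bFix ρ blk := by
    intro blk _
    simp only [hφdef]
    by_cases hb : blk = r1
    · subst hb; rw [if_pos rfl]; exact hv
    · rw [if_neg hb]; exact Submodule.zero_mem _
  have hwmem : wgen ρ L φ 0 ∈ Eb ρ b' := hle (wgen_mem ρ hL.2 hφ _)
  obtain ⟨v', hv', hw'⟩ := mem_Eb ρ |>.mp hwmem
  refine mem_Eb ρ |>.mpr ⟨v', hv', fun t ht => ?_⟩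
  have h1 : wgen ρ L φ 0 t = ρ (r1.c t) v := by
    rw [wgen_val_inblock ρ hL.2 hr1L (hsingle t ht)]
    simp [hφdef]
  rw [hwv t (hsingle t ht), ← h1, hw' t ht]

end Min
section SupTop
variable (ρ : Representation ℂ G V) {n : ℕ}

lemma sup_block_inf_rest {L : List (RBlock G n)} (hL : GoodL ρ L)
    {r : RBlock G n} (hr : r ∈ L) :
    Eb ρ r ⊔ sInf (Eb ρ '' {y | y ∈ L ∧ Eb ρ y ≠ Eb ρ r}) = ⊤ := by
  classical
  rw [eq_top_iff]
  intro w _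
  set w2 : Fin n → V :=
    fun t => if ∃ y, y ∈ L ∧ Eb ρ y ≠ Eb ρ r ∧ t ∈ y.T then 0 else w t with hw2def
  have hw2 : w2 ∈ sInf (Eb ρ '' {y | y ∈ L ∧ Eb ρ y ≠ Eb ρ r}) := by
    apply Submodule.mem_sInf.mpr
    rintro p ⟨y, ⟨hyL, hyne⟩, rfl⟩
    refine mem_Eb ρ |>.mpr ⟨0, Submodule.zero_mem _, fun t ht => ?_⟩
    rw [map_zero, hw2def]
    simp only []
    rw [if_pos ⟨y, hyL, hyne, ht⟩]
  have hw1 : w - w2 ∈ Eb ρ r := by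
    refine mem_Eb ρ |>.mpr ⟨0, Submodule.zero_mem _, fun t ht => ?_⟩
    rw [map_zero]
    have hw2t : w2 t = w t := by
      rw [hw2def]
      simp only []
      rw [if_neg]
      rintro ⟨y, hyL, hyne, hty⟩
      have hyr : y ≠ r := fun h => hyne (h ▸ rfl)
      have := (pairwise_compat_forall ρ hL.2 hyL hr hyr).1
      exact (Finset.disjoint_left.mp this hty) ht
    simp [hw2t]
  have : w = (w - w2) + w2 := by abel
  rw [this]
  exact Submodule.add_mem_sup hw1 hw2

lemma ann_SInfE (L : List (RBlock G n)) :
    (SInfE ρ L).dualAnnihilator =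
      sSup ((fun b => (Eb ρ b).dualAnnihilator) '' {x | x ∈ L}) := by
  induction L with
  | nil =>
    rw [SInfE_nil, Submodule.dualAnnihilator_top]
    simp
  | cons b bs ih =>
    rw [SInfE_cons, Subspace.dualAnnihilator_inf_eq, ih]
    have : {x | x ∈ b :: bs} = insert b {x | x ∈ bs} := by
      ext y; simp [List.mem_cons]
    rw [this, Set.image_insert_eq, sSup_insert]

end SupTop

theorem GSet_isBuilding
    [Fintype G] [FiniteDimensional ℂ V] (ρ : Representation ℂ G V)
    (hfaith : Function.Injective ρ) (hfix : fixedSpace ρ ⊤ = ⊥) (n : ℕ) :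
    ∀ C : Submodule ℂ (Module.Dual ℂ (Fin n → V)),
      (∃ S : Set (Submodule ℂ (Module.Dual ℂ (Fin n → V))),
          S ⊆ Submodule.dualAnnihilator '' GPrime ρ n ∧ S.Nonempty ∧ C = sSup S) →
      C = sSup {W | W ∈ Submodule.dualAnnihilator '' GPrime ρ n ∧ W ≤ C ∧
            ∀ W' ∈ Submodule.dualAnnihilator '' GPrime ρ n, W' ≤ C → W ≤ W' → W' = W} ∧
      sSupIndep
        {W | W ∈ Submodule.dualAnnihilator '' GPrime ρ n ∧ W ≤ C ∧
            ∀ W' ∈ Submodule.dualAnnihilator '' GPrime ρ n, W' ≤ C → W ≤ W' → W' = W} := by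
  classical
  intro C hC
  obtain ⟨S, hSsub, hSne, hCsup⟩ := hC
  set Gset := Submodule.dualAnnihilator '' GPrime ρ n with hGset
  set M := {W | W ∈ Gset ∧ W ≤ C ∧ ∀ W' ∈ Gset, W' ≤ C → W ≤ W' → W' = W} with hM
  have hnoeth : IsNoetherian ℂ (Module.Dual ℂ (Fin n → V)) := inferInstance
  -- Part 1: C = sSup M (purely order-theoretic)
  have hmaxex : ∀ W ∈ S, ∃ X ∈ M, W ≤ X := by
    intro W hW
    have hWG : W ∈ Gset := hSsub hW
    have hWC : W ≤ C := hCsup ▸ le_sSup hW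
    obtain ⟨X, hX, hXmax⟩ := (set_has_maximal_iff_noetherian.mpr hnoeth)
      {X | X ∈ Gset ∧ W ≤ X ∧ X ≤ C} ⟨W, hWG, le_rfl, hWC⟩
    refine ⟨X, ⟨hX.1, hX.2.2, ?_⟩, hX.2.1⟩
    intro W' hW'G hW'C hXW'
    by_contra hne
    exact hXmax W' ⟨hW'G, le_trans hX.2.1 hXW', hW'C⟩
      (lt_of_le_of_ne hXW' (fun h => hne h.symm))
  have hpart1 : C = sSup M := by
    apply le_antisymm
    · rw [hCsup]
      apply sSup_le
      intro W hW
      obtain ⟨X, hXM, hWX⟩ := hmaxex W hW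
      exact le_trans hWX (le_sSup hXM)
    · exact sSup_le (fun W hW => hW.2.1)
  refine ⟨hpart1, ?_⟩
  -- Part 2: independence
  rcases subsingleton_or_nontrivial V with hV | hV
  · haveI : Subsingleton (Fin n → V) := inferInstance
    haveI : Subsingleton (Module.Dual ℂ (Fin n → V)) := by
      constructor
      intro f g
      apply LinearMap.ext
      intro x
      rw [Subsingleton.elim x 0, map_zero, map_zero]
    intro a _
    have : a = ⊥ := by
      apply le_bot_iff.mp
      intro x _
      rw [Subsingleton.elim x (0 : Module.Dual ℂ (Fin n → V))]
      exact Submodule.zero_mem ⊥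
    rw [this]
    exact disjoint_bot_left
  · -- extract a finite generating subfamily
    have hcomp : IsCompactElement C :=
      (Submodule.fg_iff_compact C).mp (IsNoetherian.noetherian C)
    obtain ⟨F₁, hF₁sub, hF₁le⟩ := (CompleteLattice.isCompactElement_iff_exists_le_sSup_of_le_sSup (k := C)).mp hcomp S (le_of_eq hCsup)
    have hCF : C = sSup (↑F₁ : Set (Submodule ℂ (Module.Dual ℂ (Fin n → V)))) := by
      rw [Finset.sup_id_eq_sSup] at hF₁le
      apply le_antisymm hF₁le
      apply sSup_le
      intro W hW
      rw [hCsup]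
      exact le_sSup (hF₁sub hW)
    have hblocks : ∀ W ∈ F₁,
        ∃ b : RBlock G n, BlockOK ρ b ∧ (Eb ρ b).dualAnnihilator = W := by
      intro W hW
      obtain ⟨A, hAG, hAW⟩ := hSsub (hF₁sub hW)
      obtain ⟨k, K, i, g, hi, _, hk0, hA⟩ := hAG
      obtain ⟨b, hbOK, hbE⟩ := HK_to_block ρ hfaith K i g hi hk0
      exact ⟨b, hbOK, by rw [hbE, ← hA, hAW]⟩
    set LIn : List (RBlock G n) :=
      F₁.toList.attach.map (fun x => (hblocks x.1 (Finset.mem_toList.mp x.2)).choose)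
      with hLIn
    have hLInOK : ∀ b ∈ LIn, BlockOK ρ b := by
      intro b hb
      obtain ⟨x, _, rfl⟩ := List.mem_map.mp hb
      exact (hblocks x.1 (Finset.mem_toList.mp x.2)).choose_spec.1
    have hLInann : ((fun b => (Eb ρ b).dualAnnihilator) '' {x | x ∈ LIn}) = ↑F₁ := by
      ext W
      simp only [Set.mem_image, Set.mem_setOf_eq, Finset.mem_coe]
      constructor
      · rintro ⟨b, hb, rfl⟩
        obtain ⟨x, _, rfl⟩ := List.mem_map.mp hb
        rw [(hblocks x.1 (Finset.mem_toList.mp x.2)).choose_spec.2]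
        exact Finset.mem_toList.mp x.2
      · intro hW
        refine ⟨(hblocks W hW).choose, ?_, (hblocks W hW).choose_spec.2⟩
        apply List.mem_map.mpr
        exact ⟨⟨W, Finset.mem_toList.mpr hW⟩, List.mem_attach _ _, rfl⟩
    have hC_ann : C = (SInfE ρ LIn).dualAnnihilator := by
      rw [ann_SInfE, hLInann, hCF]
    obtain ⟨hLBgood, hLBinf⟩ := normL_spec ρ hfix LIn hLInOK
    have hB : C = (SInfE ρ (normL ρ LIn)).dualAnnihilator := by
      rw [hLBinf]
      exact hC_ann
    -- every maximal element comes from a block of the normalized family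
    have hrep : ∀ a, a ∈ M → ∃ r ∈ normL ρ LIn, a = (Eb ρ r).dualAnnihilator := by
      intro a ha
      obtain ⟨F', hF'G, hF'a⟩ := ha.1
      obtain ⟨k, K, i, g, hi, _, hk0, hA⟩ := hF'G
      obtain ⟨b', hb'OK, hb'E⟩ := HK_to_block ρ hfaith K i g hi hk0
      have hb'F : Eb ρ b' = F' := hb'E.trans hA.symm
      have hBle : SInfE ρ (normL ρ LIn) ≤ F' := by
        apply Subspace.dualAnnihilator_le_dualAnnihilator_iff.mp
        rw [hF'a, ← hB]
        exact ha.2.1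
      obtain ⟨r, hrLB, hrle⟩ :=
        min_lemma ρ hLBgood hb'OK (by rw [hb'F]; exact hBle)
      have h1 : a ≤ (Eb ρ r).dualAnnihilator := by
        rw [← hF'a]
        apply Subspace.dualAnnihilator_le_dualAnnihilator_iff.mpr
        rw [← hb'F]
        exact hrle
      have hG : (Eb ρ r).dualAnnihilator ∈ Gset :=
        ⟨Eb ρ r, block_to_GPrime ρ (hLBgood.1 r hrLB), rfl⟩
      have hleC : (Eb ρ r).dualAnnihilator ≤ C := by
        rw [hB]
        exact Subspace.dualAnnihilator_le_dualAnnihilator_iff.mpr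
          (SInfE_le_of_mem ρ hrLB)
      exact ⟨r, hrLB, (ha.2.2 _ hG hleC h1).symm⟩
    intro a ha
    obtain ⟨r, hrLB, hra⟩ := hrep a ha
    have htop : Eb ρ r ⊔ sInf (Eb ρ '' {y | y ∈ normL ρ LIn ∧ Eb ρ y ≠ Eb ρ r}) = ⊤ :=
      sup_block_inf_rest ρ hLBgood hrLB
    have hdisj : Disjoint ((Eb ρ r).dualAnnihilator)
        (sInf (Eb ρ '' {y | y ∈ normL ρ LIn ∧ Eb ρ y ≠ Eb ρ r})).dualAnnihilator := by
      rw [disjoint_iff, ← Submodule.dualAnnihilator_sup_eq, htop,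
        Submodule.dualAnnihilator_top]
    rw [hra]
    apply hdisj.mono_right
    apply sSup_le
    intro b hb
    obtain ⟨s, hsLB, hsb⟩ := hrep b hb.1
    have hsne : Eb ρ s ≠ Eb ρ r := by
      intro h
      apply hb.2
      rw [Set.mem_singleton_iff, hsb, h, ← hra]
    rw [hsb]
    apply Subspace.dualAnnihilator_le_dualAnnihilator_iff.mpr
    exact sInf_le ⟨s, ⟨hsLB, hsne⟩, rfl⟩
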